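/- Let M ≥ 2 be an integer and θ uniform on [−π/M, π/M], with v = cos θ − |sin θ|·cot(π/M). Then v has density p_v(x) = (M·sin(π/M))/(π·√(1 − sin²(π/M)·x²)) for x ∈ [0,1] and p_v(x) = 0 otherwise. -/

import Mathlib

open MeasureTheory ProbabilityTheory Real Set

lemma vpdf_aux1 (s : ℝ) (hs : 0 < s) {b : ℝ} (hb : 0 ≤ b) (hsb : s * b < 1) :
    ∫ t in (0:ℝ)..b, (1 / Real.sqrt (1 - s ^ 2 * t ^ 2)) = Real.arcsin (s * b) / s := by
  have key : ∀ t ∈ Set.uIcc (0:ℝ) b,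
      HasDerivAt (fun u => Real.arcsin (s * u) / s) (1 / Real.sqrt (1 - s ^ 2 * t ^ 2)) t := by
    intro t ht
    rw [Set.uIcc_of_le hb] at ht
    have h1 : 0 ≤ s * t := mul_nonneg hs.le ht.1
    have h2 : s * t < 1 := lt_of_le_of_lt (by nlinarith [ht.2]) hsb
    have hA : HasDerivAt Real.arcsin (1 / Real.sqrt (1 - (s*t) ^ 2)) (s * t) :=
      Real.hasDerivAt_arcsin (by linarith) (by linarith)
    have hB : HasDerivAt (fun u : ℝ => s * u) s t := by
      simpa using (hasDerivAt_id t).const_mul s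
    have := (hA.comp t hB).div_const s
    have heq : 1 / Real.sqrt (1 - (s*t) ^ 2) * s / s = 1 / Real.sqrt (1 - s ^ 2 * t ^ 2) := by
      rw [mul_div_cancel_right₀ _ hs.ne', mul_pow]
    rwa [heq] at this
  have hcont : ContinuousOn (fun t => 1 / Real.sqrt (1 - s ^ 2 * t ^ 2)) (Set.uIcc 0 b) := by
    apply ContinuousOn.div continuousOn_const
    · exact (Real.continuous_sqrt.comp (by continuity)).continuousOn
    · intro t ht
      rw [Set.uIcc_of_le hb] at ht
      have h2 : s * t < 1 := lt_of_le_of_lt (by nlinarith [ht.2, ht.1]) hsb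
      have : 0 < 1 - s ^ 2 * t ^ 2 := by nlinarith [mul_nonneg hs.le ht.1]
      positivity
  have := intervalIntegral.integral_eq_sub_of_hasDerivAt key
    (hcont.intervalIntegrable)
  rw [this]
  simp

lemma vpdf_aux2 (M : ℕ) (hM : 2 ≤ M) {b : ℝ} (hb : 0 ≤ b)
    (hsb : Real.sin (π / M) * b < 1) :
    ∫⁻ t in Set.Icc (0:ℝ) b, ENNReal.ofReal
        (M * Real.sin (π / M) / (π * Real.sqrt (1 - Real.sin (π / M) ^ 2 * t ^ 2)))
      = ENNReal.ofReal (Real.arcsin (Real.sin (π / M) * b) / (π / M)) := by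
  have hM0 : (0:ℝ) < M := by positivity
  have hα0 : 0 < π / M := by positivity
  have hα2 : π / M ≤ π / 2 := by
    apply div_le_div_of_nonneg_left pi_pos.le (by norm_num)
    exact_mod_cast hM
  set s := Real.sin (π / M) with hsdef
  have hs : 0 < s := Real.sin_pos_of_pos_of_lt_pi hα0 (lt_of_le_of_lt hα2 (by linarith [pi_pos]))
  have hpos : ∀ t ∈ Set.Icc (0:ℝ) b, 0 < 1 - s ^ 2 * t ^ 2 := by
    intro t ht
    have h1 : 0 ≤ s * t := mul_nonneg hs.le ht.1
    have h2 : s * t < 1 := lt_of_le_of_lt (by nlinarith [ht.2]) hsb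
    nlinarith
  have hcont : ContinuousOn (fun t => (M:ℝ) * s / (π * Real.sqrt (1 - s ^ 2 * t ^ 2)))
      (Set.Icc (0:ℝ) b) := by
    apply ContinuousOn.div continuousOn_const
    · exact (continuous_const.mul (Real.continuous_sqrt.comp (by continuity))).continuousOn
    · intro t ht
      have := hpos t ht
      positivity
  have hint : IntegrableOn (fun t => (M:ℝ) * s / (π * Real.sqrt (1 - s ^ 2 * t ^ 2)))
      (Set.Icc (0:ℝ) b) := hcont.integrableOn_Icc
  have hnn : 0 ≤ᵐ[volume.restrict (Set.Icc (0:ℝ) b)]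
      fun t => (M:ℝ) * s / (π * Real.sqrt (1 - s ^ 2 * t ^ 2)) := by
    filter_upwards with t
    positivity
  rw [← MeasureTheory.ofReal_integral_eq_lintegral_ofReal hint hnn]
  congr 1
  rw [MeasureTheory.integral_Icc_eq_integral_Ioc, ← intervalIntegral.integral_of_le hb]
  have : ∀ t, (M:ℝ) * s / (π * Real.sqrt (1 - s ^ 2 * t ^ 2))
      = ((M:ℝ) * s / π) * (1 / Real.sqrt (1 - s ^ 2 * t ^ 2)) := by
    intro t; field_simp
  simp_rw [this]
  rw [intervalIntegral.integral_const_mul, vpdf_aux1 s hs hb hsb]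
  field_simp

theorem v_pdf {Ω : Type*} [MeasureSpace Ω]
    [IsProbabilityMeasure (ℙ : Measure Ω)]
    (M : ℕ) (hM : 2 ≤ M) (θ : Ω → ℝ) (hmθ : Measurable θ)
    (hθ : Measure.map θ ℙ =
      (ENNReal.ofReal (2 * (Real.pi / M)))⁻¹ •
        (volume.restrict (Set.Icc (-(Real.pi / M)) (Real.pi / M)))) :
    Measure.map (fun ω => Real.cos (θ ω) -
        |Real.sin (θ ω)| * (Real.cos (Real.pi / M) / Real.sin (Real.pi / M))) ℙ =
      volume.withDensity (fun x => ENNReal.ofReal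
        (if x ∈ Set.Icc (0 : ℝ) 1 then
          M * Real.sin (Real.pi / M) / (Real.pi * Real.sqrt (1 - Real.sin (Real.pi / M) ^ 2 * x ^ 2))
        else 0)) := by
  have hM0 : (0:ℝ) < M := by
    have : (0:ℕ) < M := by omega
    exact_mod_cast this
  set α := π / M with hαdef
  set s := Real.sin α with hsdef
  set F : ℝ → ℝ := fun t => Real.cos t - |Real.sin t| * (Real.cos α / s) with hFdef
  set d : ℝ → ℝ := fun t => M * s / (π * Real.sqrt (1 - s ^ 2 * t ^ 2)) with hddef
  have hα0 : 0 < α := by rw [hαdef]; positivity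
  have hα2 : α ≤ π / 2 := by
    rw [hαdef]
    apply div_le_div_of_nonneg_left pi_pos.le (by norm_num)
    exact_mod_cast hM
  have hs : 0 < s := Real.sin_pos_of_pos_of_lt_pi hα0 (by linarith [pi_pos])
  have hs1 : s ≤ 1 := Real.sin_le_one α
  have harc : Real.arcsin s = α := Real.arcsin_sin (by linarith [pi_pos]) hα2
  have hFm : Measurable F := by fun_prop
  have hdm : Measurable fun t => ENNReal.ofReal (d t) := by fun_prop
  have hind : (fun x => ENNReal.ofReal (if x ∈ Set.Icc (0:ℝ) 1 then d x else 0))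
      = (Set.Icc (0:ℝ) 1).indicator (fun t => ENNReal.ofReal (d t)) := by
    funext t
    by_cases h : t ∈ Set.Icc (0:ℝ) 1 <;> simp [h]
  -- pointwise formula for F on the interval
  have hFt : ∀ t ∈ Set.Icc (-α) α, F t = Real.sin (α - |t|) / s := by
    intro t ht
    have habs : |t| ≤ α := abs_le.mpr ⟨ht.1, ht.2⟩
    have hsinabs : Real.sin |t| = |Real.sin t| := by
      rcases le_or_gt 0 t with h | h
      · rw [abs_of_nonneg h, abs_of_nonneg]
        apply Real.sin_nonneg_of_nonneg_of_le_pi h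
        linarith [abs_le.mp habs, le_abs_self t, pi_pos]
      · rw [abs_of_neg h, Real.sin_neg, abs_of_nonpos (Real.sin_nonpos_of_nonpos_of_neg_pi_le h.le (by have := ht.1; linarith [pi_pos]))]
    rw [hFdef]
    simp only
    rw [Real.sin_sub, Real.cos_abs, hsinabs]
    field_simp
    ring
  have hF0 : ∀ t ∈ Set.Icc (-α) α, 0 ≤ F t := by
    intro t ht
    rw [hFt t ht]
    apply div_nonneg _ hs.le
    apply Real.sin_nonneg_of_nonneg_of_le_pi
    · have := abs_le.mpr ⟨ht.1, ht.2⟩; linarith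
    · have := abs_nonneg t; linarith [pi_pos]
  have hF1 : ∀ t ∈ Set.Icc (-α) α, F t ≤ 1 := by
    intro t ht
    rw [hFt t ht, div_le_one hs, hsdef]
    have habs : |t| ≤ α := abs_le.mpr ⟨ht.1, ht.2⟩
    have h0t := abs_nonneg t
    apply Real.strictMonoOn_sin.monotoneOn ⟨by linarith, by linarith⟩
      ⟨by linarith, hα2⟩ (by linarith)
  haveI : IsProbabilityMeasure (Measure.map (fun ω => F (θ ω)) ℙ) :=
    Measure.isProbabilityMeasure_map (hFm.comp hmθ).aemeasurable
  have h2α0 : (0:ℝ) < 2 * α := by linarith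
  have hofR0 : ENNReal.ofReal (2 * α) ≠ 0 := (ENNReal.ofReal_pos.mpr h2α0).ne'
  apply Measure.ext_of_Iic
  intro x
  have hLHS : Measure.map (fun ω => F (θ ω)) ℙ (Iic x)
      = (ENNReal.ofReal (2 * α))⁻¹ * volume (F ⁻¹' Iic x ∩ Set.Icc (-α) α) := by
    rw [show (fun ω => F (θ ω)) = F ∘ θ from rfl, ← Measure.map_map hFm hmθ, hθ,
      Measure.map_smul, Measure.smul_apply, Measure.map_apply hFm measurableSet_Iic,
      Measure.restrict_apply (hFm measurableSet_Iic), smul_eq_mul]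
  have hRHS : volume.withDensity (fun x => ENNReal.ofReal
        (if x ∈ Set.Icc (0 : ℝ) 1 then d x else 0)) (Iic x)
      = ∫⁻ t in Set.Icc (0:ℝ) 1 ∩ Iic x, ENNReal.ofReal (d t) := by
    rw [withDensity_apply _ measurableSet_Iic, hind, lintegral_indicator measurableSet_Icc,
      Measure.restrict_restrict measurableSet_Icc]
  rw [hLHS, hRHS]
  rcases lt_or_ge x 0 with hx0 | hx0
  · -- case x < 0
    have hset : F ⁻¹' Iic x ∩ Set.Icc (-α) α = ∅ := by
      ext t
      simp only [Set.mem_inter_iff, Set.mem_preimage, Set.mem_Iic, Set.mem_empty_iff_false,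
        iff_false, not_and]
      intro hFx ht
      have := hF0 t ht
      linarith
    have hset2 : Set.Icc (0:ℝ) 1 ∩ Iic x = ∅ := by
      ext t
      simp only [Set.mem_inter_iff, Set.mem_Icc, Set.mem_Iic, Set.mem_empty_iff_false,
        iff_false, not_and]
      rintro ⟨h1, _⟩ h2
      linarith
    rw [hset, hset2]
    simp
  rcases lt_or_ge x 1 with hx1 | hx1
  · -- case 0 ≤ x < 1
    set A := Real.arcsin (s * x) with hAdef
    have hsx0 : 0 ≤ s * x := mul_nonneg hs.le hx0
    have hsx1 : s * x < 1 := by nlinarith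
    have hA0 : 0 ≤ A := Real.arcsin_nonneg.mpr hsx0
    have hAα : A < α := by
      rw [← harc]
      exact Real.strictMonoOn_arcsin ⟨by linarith, by linarith⟩ ⟨by linarith, hs1⟩
        (by nlinarith)
    have hiff : ∀ t, |t| ≤ α → (F t ≤ x ↔ α - A ≤ |t|) := by
      intro t habs
      have hmem : t ∈ Set.Icc (-α) α := by
        rcases abs_le.mp habs with ⟨h1, h2⟩; exact ⟨h1, h2⟩
      rw [hFt t hmem, div_le_iff₀ hs, show x * s = s * x from mul_comm _ _,
        ← Real.le_arcsin_iff_sin_le ⟨by linarith [abs_nonneg t], by linarith [abs_nonneg t]⟩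
          ⟨by linarith, hsx1.le⟩, ← hAdef]
      constructor <;> intro h <;> linarith
    have hset : F ⁻¹' Iic x ∩ Set.Icc (-α) α
        = Set.Icc (-α) (A - α) ∪ Set.Icc (α - A) α := by
      ext t
      simp only [Set.mem_inter_iff, Set.mem_preimage, Set.mem_Iic, Set.mem_union, Set.mem_Icc]
      constructor
      · rintro ⟨hFx, ht1, ht2⟩
        have habs : |t| ≤ α := abs_le.mpr ⟨ht1, ht2⟩
        have h := (hiff t habs).mp hFx
        rcases le_abs.mp h with h' | h'
        · right; exact ⟨h', ht2⟩
        · left; exact ⟨ht1, by linarith⟩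
      · rintro (⟨h1, h2⟩ | ⟨h1, h2⟩)
        · have habs : |t| ≤ α := abs_le.mpr ⟨h1, by linarith⟩
          refine ⟨(hiff t habs).mpr (le_abs.mpr (Or.inr (by linarith))), h1, by linarith⟩
        · have habs : |t| ≤ α := abs_le.mpr ⟨by linarith, h2⟩
          refine ⟨(hiff t habs).mpr (le_abs.mpr (Or.inl (by linarith))), by linarith, h2⟩
    have hdisj : Disjoint (Set.Icc (-α) (A - α)) (Set.Icc (α - A) α) := by
      rw [Set.disjoint_left]
      rintro t ⟨_, h2⟩ ⟨h3, _⟩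
      linarith
    have hvol : volume (F ⁻¹' Iic x ∩ Set.Icc (-α) α) = ENNReal.ofReal (2 * A) := by
      rw [hset, measure_union hdisj measurableSet_Icc, Real.volume_Icc, Real.volume_Icc,
        ← ENNReal.ofReal_add (by linarith) (by linarith)]
      congr 1
      ring
    have hset2 : Set.Icc (0:ℝ) 1 ∩ Iic x = Set.Icc (0:ℝ) x := by
      ext t
      simp only [Set.mem_inter_iff, Set.mem_Icc, Set.mem_Iic]
      constructor
      · rintro ⟨⟨h1, h2⟩, h3⟩; exact ⟨h1, h3⟩
      · rintro ⟨h1, h2⟩; exact ⟨⟨h1, by linarith⟩, h2⟩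
    rw [hvol, hset2]
    have := vpdf_aux2 M hM hx0 (show Real.sin (π/M) * x < 1 from hsx1)
    rw [this, ← hAdef, ← hαdef]
    have h2A : 2 * A = (2 * α) * (A / α) := by field_simp
    rw [h2A, ENNReal.ofReal_mul h2α0.le, ← mul_assoc,
      ENNReal.inv_mul_cancel hofR0 ENNReal.ofReal_ne_top, one_mul]
  · -- case 1 ≤ x
    have hsetL : F ⁻¹' Iic x ∩ Set.Icc (-α) α = Set.Icc (-α) α :=
      Set.inter_eq_right.mpr (fun t ht => le_trans (hF1 t ht) hx1)
    have hset2 : Set.Icc (0:ℝ) 1 ∩ Iic x = Set.Icc (0:ℝ) 1 :=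
      Set.inter_eq_left.mpr (fun t ht => le_trans ht.2 hx1)
    rw [hsetL, hset2, Real.volume_Icc, show α - -α = 2 * α by ring,
      ENNReal.inv_mul_cancel hofR0 ENNReal.ofReal_ne_top]
    set μg := volume.withDensity fun t => ENNReal.ofReal (d t) with hμg
    have happ : ∀ (S : Set ℝ), MeasurableSet S →
        ∫⁻ t in S, ENNReal.ofReal (d t) = μg S := fun S hS => (withDensity_apply _ hS).symm
    rw [happ _ measurableSet_Icc]
    have hsing : μg {(1:ℝ)} = 0 :=
      (withDensity_absolutelyContinuous volume _) Real.volume_singleton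
    have hIcoIcc : μg (Set.Icc (0:ℝ) 1) = μg (Set.Ico (0:ℝ) 1) := by
      apply le_antisymm
      · rw [← Set.Ico_union_right zero_le_one]
        calc μg (Set.Ico (0:ℝ) 1 ∪ {1}) ≤ μg (Set.Ico (0:ℝ) 1) + μg {1} := measure_union_le _ _
        _ = μg (Set.Ico (0:ℝ) 1) := by rw [hsing, add_zero]
      · exact measure_mono Set.Ico_subset_Icc_self
    set u : ℕ → ℝ := fun n => 1 - 1/(n+1) with hudef
    have hu0 : ∀ n : ℕ, 0 ≤ u n := by
      intro n
      have : 1/((n:ℝ)+1) ≤ 1 := by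
        rw [div_le_one (by positivity)]
        linarith [Nat.cast_nonneg (α := ℝ) n]
      simp only [hudef]
      linarith
    have hu1 : ∀ n : ℕ, u n < 1 := by
      intro n
      have : 0 < 1/((n:ℝ)+1) := by positivity
      simp only [hudef]
      linarith
    have hmono : Monotone fun n => Set.Icc (0:ℝ) (u n) := by
      intro m n hmn
      apply Set.Icc_subset_Icc le_rfl
      have h1 : 1/((n:ℝ)+1) ≤ 1/((m:ℝ)+1) := by
        apply one_div_le_one_div_of_le (by positivity)
        have : (m:ℝ) ≤ n := Nat.cast_le.mpr hmn
        linarith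
      simp only [hudef]
      linarith
    have hunion : ⋃ n, Set.Icc (0:ℝ) (u n) = Set.Ico (0:ℝ) 1 := by
      ext t
      simp only [Set.mem_iUnion, Set.mem_Icc, Set.mem_Ico]
      constructor
      · rintro ⟨n, h1, h2⟩
        exact ⟨h1, lt_of_le_of_lt h2 (hu1 n)⟩
      · rintro ⟨h1, h2⟩
        obtain ⟨n, hn⟩ := exists_nat_one_div_lt (show (0:ℝ) < 1 - t by linarith)
        exact ⟨n, h1, by simp only [hudef]; linarith⟩
    have htend := tendsto_measure_iUnion_atTop (μ := μg) hmono
    rw [hunion] at htend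
    have hval : ∀ n, μg (Set.Icc (0:ℝ) (u n)) = ENNReal.ofReal (Real.arcsin (s * u n) / α) := by
      intro n
      rw [← happ _ measurableSet_Icc]
      have := vpdf_aux2 M hM (hu0 n) (show Real.sin (π/M) * u n < 1 by
        rw [← hαdef, ← hsdef]
        nlinarith [hu1 n, hu0 n])
      rw [this, ← hαdef, ← hsdef]
    have htendu : Filter.Tendsto u Filter.atTop (nhds 1) := by
      have h0 := tendsto_one_div_add_atTop_nhds_zero_nat (𝕜 := ℝ)
      have := (tendsto_const_nhds (x := (1:ℝ)) (f := Filter.atTop)).sub h0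
      simpa [hudef, one_div] using this
    have htend2 : Filter.Tendsto (fun n => ENNReal.ofReal (Real.arcsin (s * u n) / α))
        Filter.atTop (nhds 1) := by
      have h1 : Filter.Tendsto (fun n => Real.arcsin (s * u n) / α) Filter.atTop
          (nhds (Real.arcsin (s * 1) / α)) :=
        ((Real.continuous_arcsin.tendsto _).comp (tendsto_const_nhds.mul htendu)).div_const _
      have heq : Real.arcsin (s * 1) / α = 1 := by rw [mul_one, harc, div_self hα0.ne']
      rw [heq] at h1
      have h2 := (ENNReal.continuous_ofReal.tendsto _).comp h1
      rw [ENNReal.ofReal_one] at h2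
      exact h2
    have htend' : Filter.Tendsto (fun n => μg (Set.Icc (0:ℝ) (u n))) Filter.atTop
        (nhds (μg (Set.Ico (0:ℝ) 1))) := htend
    simp_rw [hval] at htend'
    rw [hIcoIcc]
    exact (tendsto_nhds_unique htend' htend2).symm
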